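/- arXiv:2008.05625 — 2 statements merged into one kernel-verified Lean document; each statement's English description precedes it below -/
import Mathlib

section
/- Let X_1,...,X_n be i.i.d. with density α x^{-α-1}·1{x ≥ 1}, and a_n^α = n^γ log n with γ > 0. Given three vertices, the probability of a path of length two (edges (1,2) and (2,3) present): P(X_1 X_2 > a_n, X_2 X_3 > a_n) is asymptotically 2/(n^γ log n) as n → ∞. -/
open MeasureTheory Filter Real Set ENNReal

noncomputable def paretoMeasure (α : ℝ) : Measure ℝ :=
  MeasureTheory.volume.withDensity
    (fun x => ENNReal.ofReal (if 1 ≤ x then α * x ^ (-α - 1) else 0))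

noncomputable def aSeq (α γ : ℝ) (n : ℕ) : ℝ := ((n : ℝ) ^ γ * Real.log n) ^ (1/α)

lemma density_meas (α : ℝ) :
    Measurable (fun x : ℝ => ENNReal.ofReal (if 1 ≤ x then α * x ^ (-α - 1) else 0)) := by
  apply Measurable.ennreal_ofReal
  apply Measurable.ite measurableSet_Ici _ measurable_const
  fun_prop

lemma density_eq (α : ℝ) :
    (fun x : ℝ => ENNReal.ofReal (if 1 ≤ x then α * x ^ (-α - 1) else 0))
    = (Ici (1:ℝ)).indicator (fun x => ENNReal.ofReal (α * x ^ (-α - 1))) := by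
  funext x
  by_cases h : (1:ℝ) ≤ x <;> simp [indicator, h]

lemma lint_Ioi {α : ℝ} (hα : 0 < α) {t : ℝ} (ht : 0 < t) :
    ∫⁻ x in Ioi t, ENNReal.ofReal (α * x ^ (-α - 1)) = ENNReal.ofReal (t ^ (-α)) := by
  rw [← ofReal_integral_eq_lintegral_ofReal]
  · congr 1
    rw [integral_const_mul, integral_Ioi_rpow_of_lt (by linarith) ht]
    have : -α - 1 + 1 = -α := by ring
    rw [this]
    field_simp
  · exact ((integrableOn_Ioi_rpow_of_lt (by linarith) ht)).const_mul α
  · filter_upwards [MeasureTheory.ae_restrict_mem measurableSet_Ioi] with x hx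
    have hx0 : (0:ℝ) < x := lt_trans ht hx
    positivity

lemma pareto_apply_set {α : ℝ} {s : Set ℝ} (hs : MeasurableSet s) :
    paretoMeasure α s
      = ∫⁻ x in s ∩ Ici 1, ENNReal.ofReal (α * x ^ (-α - 1)) := by
  rw [paretoMeasure, withDensity_apply _ hs, density_eq]
  rw [← lintegral_indicator hs]
  rw [← lintegral_indicator (hs.inter measurableSet_Ici)]
  congr 1
  funext x
  by_cases h1 : x ∈ s <;> by_cases h2 : (1:ℝ) ≤ x <;>
    simp [indicator, h1, h2, Set.mem_Ici]

lemma pareto_Ioi_ge {α : ℝ} (hα : 0 < α) {t : ℝ} (ht : 1 ≤ t) :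
    paretoMeasure α (Ioi t) = ENNReal.ofReal (t ^ (-α)) := by
  rw [pareto_apply_set measurableSet_Ioi]
  have : Ioi t ∩ Ici 1 = Ioi t := by
    apply inter_eq_left.2
    intro x hx
    exact le_trans ht (le_of_lt hx)
  rw [this, lint_Ioi hα (lt_of_lt_of_le one_pos ht)]

lemma pareto_Ioi_le {α : ℝ} (hα : 0 < α) {t : ℝ} (ht : t ≤ 1) :
    paretoMeasure α (Ioi t) = 1 := by
  have h1 : Ioi t = Ioc t 1 ∪ Ioi 1 := (Ioc_union_Ioi_eq_Ioi ht).symm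
  have hd : Disjoint (Ioc t 1) (Ioi (1:ℝ)) := by
    apply Set.disjoint_left.2
    intro x hx hx'
    exact absurd hx.2 (not_le.2 hx')
  rw [h1, measure_union hd measurableSet_Ioi]
  have hz : paretoMeasure α (Ioc t 1) = 0 := by
    rw [pareto_apply_set measurableSet_Ioc]
    apply setLIntegral_measure_zero
    refine measure_mono_null ?_ (volume_singleton (a := (1:ℝ)))
    intro x hx
    exact le_antisymm hx.1.2 hx.2
  rw [hz, zero_add, pareto_Ioi_ge hα le_rfl]
  simp [Real.one_rpow]

lemma pareto_prob {α : ℝ} (hα : 0 < α) : IsProbabilityMeasure (paretoMeasure α) := by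
  constructor
  have h1 : (univ : Set ℝ) = Iic 1 ∪ Ioi 1 := (Iic_union_Ioi).symm
  have hd : Disjoint (Iic (1:ℝ)) (Ioi 1) := Iic_disjoint_Ioi le_rfl
  rw [h1, measure_union hd measurableSet_Ioi]
  have hz : paretoMeasure α (Iic 1) = 0 := by
    rw [pareto_apply_set measurableSet_Iic]
    apply setLIntegral_measure_zero
    refine measure_mono_null ?_ (volume_singleton (a := (1:ℝ)))
    intro x hx
    exact le_antisymm hx.1 hx.2
  rw [hz, zero_add, pareto_Ioi_ge hα le_rfl]
  simp [Real.one_rpow]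

lemma F_set {a c : ℝ} (hc : 0 < c) : {y : ℝ | c * y > a} = Ioi (a/c) := by
  ext y
  simp only [mem_setOf_eq, mem_Ioi, gt_iff_lt]
  rw [div_lt_iff₀ hc, mul_comm]

lemma F_mid {α a c : ℝ} (hα : 0 < α) (hc : 1 ≤ c) (hca : c ≤ a) :
    paretoMeasure α {y : ℝ | c * y > a}
      = ENNReal.ofReal (a ^ (-α) * c ^ α) := by
  have hc0 : (0:ℝ) < c := lt_of_lt_of_le one_pos hc
  have ha0 : (0:ℝ) < a := lt_of_lt_of_le hc0 hca
  rw [F_set hc0, pareto_Ioi_ge hα ((one_le_div hc0).2 hca)]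
  congr 1
  rw [Real.div_rpow ha0.le hc0.le, Real.rpow_neg hc0.le, div_eq_mul_inv, inv_inv]

lemma F_top {α a c : ℝ} (hα : 0 < α) (hca : a ≤ c) (hc : 0 < c) :
    paretoMeasure α {y : ℝ | c * y > a} = 1 := by
  rw [F_set hc, pareto_Ioi_le hα ((div_le_one hc).2 hca)]

lemma pareto_lintegral {α : ℝ} (g : ℝ → ℝ≥0∞) (hg : Measurable g) :
    ∫⁻ x, g x ∂(paretoMeasure α)
      = ∫⁻ x in Ici 1, ENNReal.ofReal (α * x ^ (-α - 1)) * g x := by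
  rw [paretoMeasure, lintegral_withDensity_eq_lintegral_mul _ (density_meas α) hg]
  rw [← lintegral_indicator measurableSet_Ici]
  congr 1
  funext x
  by_cases h : (1:ℝ) ≤ x <;> simp [indicator, h]

lemma prod_measure_eq {α a : ℝ} (hα : 0 < α) (ha : 1 ≤ a) :
    ((paretoMeasure α).prod ((paretoMeasure α).prod (paretoMeasure α)))
      {p : ℝ × ℝ × ℝ | p.1 * p.2.1 > a ∧ p.2.1 * p.2.2 > a}
    = ENNReal.ofReal (2 * a ^ (-α) - a ^ (-(2*α))) := by
  haveI : IsProbabilityMeasure (paretoMeasure α) := pareto_prob hα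
  have ha0 : (0:ℝ) < a := lt_of_lt_of_le one_pos ha
  set μ := paretoMeasure α with hμ
  set F : ℝ → ℝ≥0∞ := fun c => μ {y : ℝ | c * y > a} with hF
  have hs2 : MeasurableSet {p : ℝ × ℝ | p.1 * p.2 > a} :=
    measurableSet_lt measurable_const (measurable_fst.mul measurable_snd)
  have hFmeas : Measurable F := by
    have : F = fun c => μ (Prod.mk c ⁻¹' {p : ℝ × ℝ | p.1 * p.2 > a}) := rfl
    rw [this]
    exact measurable_measure_prodMk_left hs2
  have hS : MeasurableSet {p : ℝ × ℝ × ℝ | p.1 * p.2.1 > a ∧ p.2.1 * p.2.2 > a} := by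
    apply MeasurableSet.inter
    · exact measurableSet_lt measurable_const (measurable_fst.mul (measurable_fst.comp measurable_snd))
    · exact measurableSet_lt measurable_const
        ((measurable_fst.comp measurable_snd).mul (measurable_snd.comp measurable_snd))
  have h1 : (μ.prod (μ.prod μ)) {p : ℝ × ℝ × ℝ | p.1 * p.2.1 > a ∧ p.2.1 * p.2.2 > a}
      = ∫⁻ x1, ∫⁻ x2, ({p : ℝ × ℝ | p.1 * p.2 > a}.indicator (fun _ => (1:ℝ≥0∞)) (x1, x2)) * F x2 ∂μ ∂μ := by
    rw [Measure.prod_apply hS]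
    apply lintegral_congr
    intro x1
    rw [Measure.prod_apply (measurable_prodMk_left hS)]
    apply lintegral_congr
    intro x2
    by_cases h : x1 * x2 > a
    · have hset : (Prod.mk x2 ⁻¹' (Prod.mk x1 ⁻¹' {p : ℝ × ℝ × ℝ | p.1 * p.2.1 > a ∧ p.2.1 * p.2.2 > a}))
          = {y : ℝ | x2 * y > a} := by
        ext y; simp [h]
      rw [hset]
      simp [indicator, h]
      rfl
    · have hset : (Prod.mk x2 ⁻¹' (Prod.mk x1 ⁻¹' {p : ℝ × ℝ × ℝ | p.1 * p.2.1 > a ∧ p.2.1 * p.2.2 > a}))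
          = (∅ : Set ℝ) := by
        ext y; simp [h]
      rw [hset]
      simp [indicator, h]
  have hum : Measurable (Function.uncurry (fun x1 x2 =>
      ({p : ℝ × ℝ | p.1 * p.2 > a}.indicator (fun _ => (1:ℝ≥0∞)) (x1, x2)) * F x2)) := by
    have : Function.uncurry (fun x1 x2 =>
        ({p : ℝ × ℝ | p.1 * p.2 > a}.indicator (fun _ => (1:ℝ≥0∞)) (x1, x2)) * F x2)
        = fun q : ℝ × ℝ => ({p : ℝ × ℝ | p.1 * p.2 > a}.indicator (fun _ => (1:ℝ≥0∞)) q) * F q.2 := by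
      funext q; rfl
    rw [this]
    exact ((measurable_const.indicator hs2)).mul (hFmeas.comp measurable_snd)
  have h2 : ∫⁻ x1, ∫⁻ x2, ({p : ℝ × ℝ | p.1 * p.2 > a}.indicator (fun _ => (1:ℝ≥0∞)) (x1, x2)) * F x2 ∂μ ∂μ
      = ∫⁻ x2, ∫⁻ x1, ({p : ℝ × ℝ | p.1 * p.2 > a}.indicator (fun _ => (1:ℝ≥0∞)) (x1, x2)) * F x2 ∂μ ∂μ :=
    lintegral_lintegral_swap hum.aemeasurable
  have h3 : ∀ x2 : ℝ, ∫⁻ x1, ({p : ℝ × ℝ | p.1 * p.2 > a}.indicator (fun _ => (1:ℝ≥0∞)) (x1, x2)) * F x2 ∂μ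
      = F x2 * F x2 := by
    intro x2
    have heq : (fun x1 => ({p : ℝ × ℝ | p.1 * p.2 > a}.indicator (fun _ => (1:ℝ≥0∞)) (x1, x2)) * F x2)
        = ({x1 : ℝ | x1 * x2 > a}).indicator (fun _ => F x2) := by
      funext x1
      by_cases h : x1 * x2 > a <;> simp [indicator, h]
    rw [heq, lintegral_indicator_const (measurableSet_lt measurable_const (measurable_mul_const x2))]
    congr 1
    have : {x1 : ℝ | x1 * x2 > a} = {y : ℝ | x2 * y > a} := by
      ext y; simp [mul_comm]
    rw [this]
  have h4 : ∫⁻ x2, ∫⁻ x1, ({p : ℝ × ℝ | p.1 * p.2 > a}.indicator (fun _ => (1:ℝ≥0∞)) (x1, x2)) * F x2 ∂μ ∂μ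
      = ∫⁻ c, F c * F c ∂μ := lintegral_congr h3
  have h5 : ∫⁻ c, F c * F c ∂μ
      = ∫⁻ x in Ici 1, ENNReal.ofReal (α * x ^ (-α - 1)) * (F x * F x) :=
    pareto_lintegral _ (hFmeas.mul hFmeas)
  have hdisj : Disjoint (Icc (1:ℝ) a) (Ioi a) :=
    (Iic_disjoint_Ioi le_rfl).mono_left Icc_subset_Iic_self
  have hsplit : Ici (1:ℝ) = Icc 1 a ∪ Ioi a := (Icc_union_Ioi_eq_Ici ha).symm
  have hA : ∫⁻ x in Icc 1 a, ENNReal.ofReal (α * x ^ (-α - 1)) * (F x * F x)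
      = ENNReal.ofReal (a ^ (-α) - a ^ (-(2*α))) := by
    have hcong : ∫⁻ x in Icc 1 a, ENNReal.ofReal (α * x ^ (-α - 1)) * (F x * F x)
        = ∫⁻ x in Icc 1 a, ENNReal.ofReal ((α * a ^ (-(2*α))) * x ^ (α - 1)) := by
      apply setLIntegral_congr_fun measurableSet_Icc
      intro x hx
      have hx0 : (0:ℝ) < x := lt_of_lt_of_le one_pos hx.1
      have hFx : F x = ENNReal.ofReal (a ^ (-α) * x ^ α) := F_mid hα hx.1 hx.2
      beta_reduce
      rw [hFx, ← ENNReal.ofReal_mul (by positivity), ← ENNReal.ofReal_mul (by positivity)]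
      congr 1
      have e0 : α * x ^ (-α - 1) * (a ^ (-α) * x ^ α * (a ^ (-α) * x ^ α))
          = α * (a ^ (-α) * a ^ (-α)) * (x ^ (-α - 1) * x ^ α * x ^ α) := by ring
      have ea : a ^ (-α) * a ^ (-α) = a ^ (-(2*α)) := by
        rw [← Real.rpow_add ha0]; congr 1; ring
      have ex : x ^ (-α - 1) * x ^ α * x ^ α = x ^ (α - 1) := by
        rw [← Real.rpow_add hx0, ← Real.rpow_add hx0]; congr 1; ring
      rw [e0, ea, ex]
    rw [hcong]
    have hcont : ContinuousOn (fun x : ℝ => (α * a ^ (-(2*α))) * x ^ (α - 1)) (Icc 1 a) := by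
      apply ContinuousOn.mul continuousOn_const
      intro x hx
      exact (Real.continuousAt_rpow_const x (α - 1)
        (Or.inl (ne_of_gt (lt_of_lt_of_le one_pos hx.1)))).continuousWithinAt
    have hint : IntegrableOn (fun x : ℝ => (α * a ^ (-(2*α))) * x ^ (α - 1)) (Icc 1 a) :=
      hcont.integrableOn_compact isCompact_Icc
    have hnn : 0 ≤ᵐ[volume.restrict (Icc (1:ℝ) a)] (fun x : ℝ => (α * a ^ (-(2*α))) * x ^ (α - 1)) := by
      filter_upwards [ae_restrict_mem measurableSet_Icc] with x hx
      have hx0 : (0:ℝ) < x := lt_of_lt_of_le one_pos hx.1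
      positivity
    rw [← ofReal_integral_eq_lintegral_ofReal hint hnn]
    congr 1
    rw [MeasureTheory.integral_Icc_eq_integral_Ioc, ← intervalIntegral.integral_of_le ha,
      intervalIntegral.integral_const_mul, integral_rpow (Or.inl (by linarith)),
      show α - 1 + 1 = α by ring, Real.one_rpow]
    have haa : a ^ (-(2*α)) * a ^ α = a ^ (-α) := by
      rw [← Real.rpow_add ha0]; congr 1; ring
    field_simp
    rw [mul_comm 2 α] at haa
    linear_combination haa
  have hB : ∫⁻ x in Ioi a, ENNReal.ofReal (α * x ^ (-α - 1)) * (F x * F x)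
      = ENNReal.ofReal (a ^ (-α)) := by
    have hcong : ∫⁻ x in Ioi a, ENNReal.ofReal (α * x ^ (-α - 1)) * (F x * F x)
        = ∫⁻ x in Ioi a, ENNReal.ofReal (α * x ^ (-α - 1)) := by
      apply setLIntegral_congr_fun measurableSet_Ioi
      intro x hx
      have hFx : F x = 1 := F_top hα (le_of_lt hx) (lt_trans ha0 hx)
      beta_reduce
      rw [hFx, mul_one, mul_one]
    rw [hcong, lint_Ioi hα ha0]
  have hnn1 : (0:ℝ) ≤ a ^ (-α) - a ^ (-(2*α)) := by
    have := Real.rpow_le_rpow_of_exponent_le ha (show -(2*α) ≤ -α by linarith)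
    linarith
  rw [h1, h2, h4, h5, hsplit, lintegral_union measurableSet_Ioi hdisj, hA, hB,
    ← ENNReal.ofReal_add hnn1 (Real.rpow_nonneg ha0.le _)]
  congr 1
  ring

theorem stmt11 (α γ : ℝ) (hα : 0 < α) (hγ : 0 < γ) :
    Tendsto (fun n : ℕ =>
      (n : ℝ) ^ γ * Real.log n *
        (((paretoMeasure α).prod ((paretoMeasure α).prod (paretoMeasure α)))
          {p : ℝ × ℝ × ℝ | p.1 * p.2.1 > aSeq α γ n ∧ p.2.1 * p.2.2 > aSeq α γ n}).toReal)
      atTop (nhds 2) := by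
  have key : ∀ᶠ n : ℕ in atTop,
      (fun n : ℕ => 2 - ((n:ℝ)^γ * Real.log n)⁻¹) n
      = (fun n : ℕ =>
        (n : ℝ) ^ γ * Real.log n *
          (((paretoMeasure α).prod ((paretoMeasure α).prod (paretoMeasure α)))
            {p : ℝ × ℝ × ℝ | p.1 * p.2.1 > aSeq α γ n ∧ p.2.1 * p.2.2 > aSeq α γ n}).toReal) n := by
    filter_upwards [eventually_ge_atTop 3] with n hn
    have hn3 : (3:ℝ) ≤ (n:ℝ) := by exact_mod_cast hn
    have hlog : 1 ≤ Real.log n := by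
      have h3 : (1:ℝ) < Real.log 3 := by
        rw [Real.lt_log_iff_exp_lt (by norm_num)]
        calc rexp 1 < 2.7182818286 := Real.exp_one_lt_d9
        _ < 3 := by norm_num
      have := Real.log_le_log (by norm_num : (0:ℝ) < 3) hn3
      linarith
    have hpow : (1:ℝ) ≤ (n:ℝ)^γ := Real.one_le_rpow (by linarith) hγ.le
    set L : ℝ := (n:ℝ)^γ * Real.log n with hLdef
    have hL1 : 1 ≤ L := by nlinarith
    have hL0 : (0:ℝ) < L := lt_of_lt_of_le one_pos hL1
    have haseq : 1 ≤ aSeq α γ n := Real.one_le_rpow hL1 (by positivity)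
    rw [prod_measure_eq hα haseq]
    have e1 : aSeq α γ n ^ (-α) = L⁻¹ := by
      rw [aSeq, ← Real.rpow_mul hL0.le, show (1/α) * (-α) = -1 by field_simp,
        Real.rpow_neg_one]
    have e2 : aSeq α γ n ^ (-(2*α)) = (L^2)⁻¹ := by
      rw [aSeq, ← Real.rpow_mul hL0.le, show (1/α) * (-(2*α)) = -2 by field_simp]
      rw [show (-2 : ℝ) = -(2:ℝ) by norm_num, Real.rpow_neg hL0.le, Real.rpow_two]
    have hsq : (L^2)⁻¹ ≤ L⁻¹ := by
      apply inv_anti₀ hL0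
      nlinarith
    have hinv0 : (0:ℝ) ≤ L⁻¹ := by positivity
    rw [e1, e2, ENNReal.toReal_ofReal (by linarith)]
    field_simp
  apply Tendsto.congr' key
  have hLtop : Tendsto (fun n : ℕ => (n:ℝ)^γ * Real.log n) atTop atTop := by
    apply Tendsto.atTop_mul_atTop₀
    · exact (tendsto_rpow_atTop hγ).comp tendsto_natCast_atTop_atTop
    · exact Real.tendsto_log_atTop.comp tendsto_natCast_atTop_atTop
  have h0 : Tendsto (fun n : ℕ => ((n:ℝ)^γ * Real.log n)⁻¹) atTop (nhds 0) :=
    hLtop.inv_tendsto_atTop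
  have h2 : Tendsto (fun _ : ℕ => (2:ℝ)) atTop (nhds 2) := tendsto_const_nhds
  simpa using h2.sub h0
end

section
/- In the modified model with Bernoulli edges (connection probability min{1, X_i X_j / a_n}), at the super-critical regime with α > 1: conditional on all X_i < √a_n, the probability that a fixed vertex X_1 is non-isolated is asymptotically 1 when n/a_n → ∞ (γ < α), and asymptotically (α/(α−1))² · n/a_n when n/a_n → 0 (γ ≥ α). -/
open MeasureTheory Filter Real Set

lemma pow_diff_le {w u v : ℝ} (m : ℕ) (hw : 0 ≤ w) (hwu : w ≤ u) (huv : u ≤ v) :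
    (m:ℝ) * w^(m-1) * (v-u) ≤ v^m - u^m ∧ v^m - u^m ≤ (m:ℝ) * v^(m-1) * (v-u) := by
  have hu : 0 ≤ u := hw.trans hwu
  have hv : 0 ≤ v := hu.trans huv
  have hvu : 0 ≤ v - u := sub_nonneg.2 huv
  have key : v^m - u^m = (∑ i ∈ Finset.range m, v ^ i * u ^ (m - 1 - i)) * (v - u) :=
    (geom_sum₂_mul v u m).symm
  constructor
  · rw [key]
    apply mul_le_mul_of_nonneg_right _ hvu
    calc (m:ℝ) * w^(m-1) = ∑ _i ∈ Finset.range m, w^(m-1) := by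
          rw [Finset.sum_const, nsmul_eq_mul, Finset.card_range]
      _ ≤ _ := by
          apply Finset.sum_le_sum
          intro i hi
          have him : i ≤ m - 1 := Nat.le_sub_one_of_lt (Finset.mem_range.1 hi)
          have : w^(m-1) = w^i * w^(m-1-i) := by
            rw [← pow_add]
            congr 1
            omega
          rw [this]
          exact mul_le_mul (pow_le_pow_left₀ hw (hwu.trans huv) i)
            (pow_le_pow_left₀ hw hwu _) (pow_nonneg hw _) (pow_nonneg hv _)
  · rw [key]
    apply mul_le_mul_of_nonneg_right _ hvu
    calc (∑ i ∈ Finset.range m, v ^ i * u ^ (m - 1 - i))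
        ≤ ∑ i ∈ Finset.range m, v ^ i * v ^ (m - 1 - i) := by
          apply Finset.sum_le_sum
          intro i hi
          exact mul_le_mul_of_nonneg_left (pow_le_pow_left₀ hu huv _) (pow_nonneg hv _)
      _ = ∑ i ∈ Finset.range m, v^(m-1) := by
          apply Finset.sum_congr rfl
          intro i hi
          have him : i ≤ m - 1 := Nat.le_sub_one_of_lt (Finset.mem_range.1 hi)
          rw [← pow_add]
          congr 1
          omega
      _ = (m:ℝ) * v^(m-1) := by
          rw [Finset.sum_const, nsmul_eq_mul, Finset.card_range]

lemma intA1 {α s : ℝ} (hα : 1 < α) (hs : 1 ≤ s) :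
    ∫ x in Set.Ioc 1 s, α * x ^ (-α-1) = 1 - s ^ (-α) := by
  rw [← intervalIntegral.integral_of_le hs, intervalIntegral.integral_const_mul,
    integral_rpow (Or.inr ⟨by nlinarith, by
      rw [Set.uIcc_of_le hs]; intro h; exact absurd h.1 (by norm_num)⟩)]
  have h1 : -α - 1 + 1 = -α := by ring
  rw [h1, Real.one_rpow]
  have hne : -α ≠ 0 := by intro h; nlinarith
  rw [mul_div_assoc'] at *
  rw [div_eq_iff hne]
  ring

lemma intA2 {α t : ℝ} (hα : 1 < α) (ht : 1 ≤ t) :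
    ∫ x in Set.Ioc 1 t, α * x ^ (-α) = α/(α-1) * (1 - t ^ (1-α)) := by
  rw [← intervalIntegral.integral_of_le ht, intervalIntegral.integral_const_mul,
    integral_rpow (Or.inr ⟨by intro h; exact absurd (show α = 1 by linarith) (by intro h2; rw [h2] at hα; exact lt_irrefl 1 hα), by
      rw [Set.uIcc_of_le ht]; intro h; exact absurd h.1 (by norm_num)⟩)]
  have h1 : -α + 1 = 1 - α := by ring
  rw [h1, Real.one_rpow]
  have hne : α - 1 ≠ 0 := by linarith
  have hne2 : (1:ℝ) - α ≠ 0 := by intro h; apply hne; linarith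
  field_simp
  ring

lemma intB {α s a : ℝ} (hα : 1 < α) (hs : 1 ≤ s) (ha : 0 < a) (x : ℝ) :
    ∫ y in Set.Ioc 1 s, (1 - x*y/a) * (α * y ^ (-α-1))
      = (1 - s ^ (-α)) - x/a * (α/(α-1) * (1 - s ^ (1-α))) := by
  have h0 : (0:ℝ) ∉ Set.uIcc 1 s := by
    rw [Set.uIcc_of_le hs]; intro h; exact absurd h.1 (by norm_num)
  have i1 : IntervalIntegrable (fun y : ℝ => α * y ^ (-α-1)) volume 1 s :=
    (intervalIntegral.intervalIntegrable_rpow (Or.inr h0)).const_mul α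
  have i2 : IntervalIntegrable (fun y : ℝ => x/a * (α * y ^ (-α))) volume 1 s :=
    ((intervalIntegral.intervalIntegrable_rpow (Or.inr h0)).const_mul α).const_mul (x/a)
  have hcongr : ∀ y ∈ Set.Ioc (1:ℝ) s,
      (1 - x*y/a) * (α * y ^ (-α-1)) = α * y ^ (-α-1) - x/a * (α * y ^ (-α)) := by
    intro y hy
    have hy0 : (0:ℝ) < y := lt_trans one_pos hy.1
    have : y ^ (-α) = y ^ (-α-1) * y := by
      rw [← Real.rpow_add_one (ne_of_gt hy0)]
      ring_nf
    rw [this]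
    field_simp
  rw [MeasureTheory.setIntegral_congr_fun measurableSet_Ioc hcongr,
    ← intervalIntegral.integral_of_le hs,
    intervalIntegral.integral_sub i1 i2,
    intervalIntegral.integral_of_le hs, intervalIntegral.integral_of_le hs]
  rw [intA1 hα hs]
  have : ∫ y in Set.Ioc 1 s, x/a * (α * y ^ (-α)) = x/a * ∫ y in Set.Ioc 1 s, α * y ^ (-α) :=
    MeasureTheory.integral_const_mul _ _
  rw [this, intA2 hα hs]



lemma aSeq_nonneg (α γ : ℝ) (n : ℕ) : 0 ≤ aSeq α γ n := by
  apply Real.rpow_nonneg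
  rcases Nat.eq_zero_or_pos n with h | h
  · subst h; simp
  · exact mul_nonneg (Real.rpow_nonneg (Nat.cast_nonneg n) γ)
      (Real.log_nonneg (by exact_mod_cast h))

lemma aSeq_ge (α γ : ℝ) (hα : 0 < α) (hγ : 0 < γ) {n : ℕ} (hn : 3 ≤ n) :
    (n:ℝ) ^ (γ/α) ≤ aSeq α γ n := by
  have hn1 : (1:ℝ) ≤ (n:ℝ) := by exact_mod_cast Nat.one_le_of_lt hn
  have hlog : 1 ≤ Real.log n := by
    rw [← Real.log_exp 1]
    apply Real.log_le_log (Real.exp_pos 1)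
    calc Real.exp 1 ≤ 3 := by linarith [Real.exp_one_lt_d9]
      _ ≤ (n:ℝ) := by exact_mod_cast hn
  have h1 : (n:ℝ) ^ γ ≤ (n:ℝ)^γ * Real.log n := by
    nlinarith [Real.rpow_nonneg (show (0:ℝ) ≤ n by linarith) γ]
  calc (n:ℝ) ^ (γ/α) = ((n:ℝ)^γ)^(1/α) := by
        rw [← Real.rpow_mul (by linarith)]; congr 1; field_simp
    _ ≤ aSeq α γ n := Real.rpow_le_rpow (Real.rpow_nonneg (by linarith) γ) h1
        (by positivity)

lemma aSeq_tendsto (α γ : ℝ) (hα : 0 < α) (hγ : 0 < γ) :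
    Tendsto (fun n : ℕ => aSeq α γ n) atTop atTop := by
  apply tendsto_atTop_mono' atTop
    (eventually_atTop.2 ⟨3, fun n hn => aSeq_ge α γ hα hγ hn⟩)
  exact (tendsto_rpow_atTop (by positivity)).comp tendsto_natCast_atTop_atTop

lemma aSeq_rpow_neg (α γ : ℝ) (hα : 0 < α) {n : ℕ} (hn : 2 ≤ n) (c : ℝ) :
    (aSeq α γ n) ^ c = ((n:ℝ)^γ * Real.log n) ^ (c/α) := by
  have hX : 0 < (n:ℝ)^γ * Real.log n := by
    have hn1 : (1:ℝ) < (n:ℝ) := by exact_mod_cast hn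
    exact mul_pos (Real.rpow_pos_of_pos (by linarith) γ) (Real.log_pos hn1)
  rw [aSeq, ← Real.rpow_mul hX.le]
  congr 1
  field_simp

lemma nmul_aSeq_tendsto (α γ : ℝ) (hα : 0 < α) (hγ : 2 < γ) :
    Tendsto (fun n : ℕ => (n:ℝ) * (aSeq α γ n) ^ (-α/2)) atTop (nhds 0) := by
  have hub : ∀ᶠ n : ℕ in atTop, (n:ℝ) * (aSeq α γ n) ^ (-α/2) ≤ (n:ℝ) ^ (1 - γ/2) := by
    filter_upwards [eventually_atTop.2 ⟨3, fun n hn => hn⟩] with n hn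
    have hn1 : (1:ℝ) ≤ (n:ℝ) := by exact_mod_cast Nat.one_le_of_lt hn
    have hnpos : (0:ℝ) < n := by linarith
    have ha : (n:ℝ) ^ (γ/α) ≤ aSeq α γ n := aSeq_ge α γ hα (by linarith) hn
    have hapos : (0:ℝ) < (n:ℝ)^(γ/α) := Real.rpow_pos_of_pos hnpos _
    have h1 : (aSeq α γ n) ^ (-α/2) ≤ ((n:ℝ)^(γ/α)) ^ (-α/2) :=
      Real.rpow_le_rpow_of_nonpos hapos ha (by nlinarith)
    have h2 : ((n:ℝ)^(γ/α)) ^ (-α/2) = (n:ℝ) ^ (-γ/2) := by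
      rw [← Real.rpow_mul hnpos.le]
      congr 1
      field_simp
    calc (n:ℝ) * (aSeq α γ n) ^ (-α/2) ≤ (n:ℝ) * (n:ℝ)^(-γ/2) := by
          rw [h2] at h1; exact mul_le_mul_of_nonneg_left h1 hnpos.le
      _ = (n:ℝ) ^ (1 - γ/2) := by
          rw [← Real.rpow_one_add' hnpos.le (by intro h; nlinarith)]
          congr 1; ring
  have hlb : ∀ᶠ n : ℕ in atTop, 0 ≤ (n:ℝ) * (aSeq α γ n) ^ (-α/2) := by
    filter_upwards with n
    exact mul_nonneg (Nat.cast_nonneg n) (Real.rpow_nonneg (aSeq_nonneg α γ n) _)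
  have hub0 : Tendsto (fun n : ℕ => (n:ℝ) ^ (1 - γ/2)) atTop (nhds 0) := by
    have : Tendsto (fun x : ℝ => x ^ (-(γ/2 - 1))) atTop (nhds 0) :=
      tendsto_rpow_neg_atTop (by linarith)
    have heq : (fun n : ℕ => (n:ℝ) ^ (1 - γ/2)) = (fun x : ℝ => x ^ (-(γ/2 - 1))) ∘ (fun n : ℕ => (n:ℝ)) := by
      funext n; simp only [Function.comp]; congr 1; ring
    rw [heq]
    exact this.comp tendsto_natCast_atTop_atTop
  exact tendsto_of_tendsto_of_tendsto_of_le_of_le' tendsto_const_nhds hub0 hlb hub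

lemma ndiv_aSeq_atTop (α γ : ℝ) (hα : 1 < α) (hγ : 2 < γ) (hγα : γ < α) :
    Tendsto (fun n : ℕ => (n:ℝ) / aSeq α γ n) atTop atTop := by
  set ε := (α - γ)/2 with hε
  have hεpos : 0 < ε := by rw [hε]; linarith
  have hlb : ∀ᶠ n : ℕ in atTop,
      ε^(1/α) * (n:ℝ)^((α-γ-ε)/α) ≤ (n:ℝ) / aSeq α γ n := by
    filter_upwards [eventually_atTop.2 ⟨3, fun n hn => hn⟩] with n hn
    have hn1 : (1:ℝ) ≤ (n:ℝ) := by exact_mod_cast Nat.one_le_of_lt hn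
    have hnpos : (0:ℝ) < n := by linarith
    have hapos : 0 < aSeq α γ n :=
      lt_of_lt_of_le (Real.rpow_pos_of_pos hnpos _) (aSeq_ge α γ (by linarith) (by linarith) hn)
    -- upper bound on aSeq
    have hlog : Real.log n ≤ (n:ℝ)^ε / ε := Real.log_le_rpow_div hnpos.le hεpos
    have hX : (n:ℝ)^γ * Real.log n ≤ (n:ℝ)^(γ+ε) * ε⁻¹ := by
      have := mul_le_mul_of_nonneg_left hlog (Real.rpow_nonneg hnpos.le γ)
      calc (n:ℝ)^γ * Real.log n ≤ (n:ℝ)^γ * ((n:ℝ)^ε / ε) := this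
        _ = (n:ℝ)^(γ+ε) * ε⁻¹ := by
            rw [Real.rpow_add hnpos]; ring
    have haub : aSeq α γ n ≤ (n:ℝ)^((γ+ε)/α) * (ε⁻¹)^(1/α) := by
      calc aSeq α γ n ≤ ((n:ℝ)^(γ+ε) * ε⁻¹)^(1/α) := by
            apply Real.rpow_le_rpow _ hX (by positivity)
            rcases Nat.eq_zero_or_pos n with h | h
            · omega
            · exact mul_nonneg (Real.rpow_nonneg hnpos.le γ)
                (Real.log_nonneg hn1)
        _ = (n:ℝ)^((γ+ε)/α) * (ε⁻¹)^(1/α) := by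
            rw [Real.mul_rpow (Real.rpow_nonneg hnpos.le _) (by positivity),
              ← Real.rpow_mul hnpos.le]
            congr 2
            field_simp
    have hubpos : 0 < (n:ℝ)^((γ+ε)/α) * (ε⁻¹)^(1/α) := by positivity
    calc ε^(1/α) * (n:ℝ)^((α-γ-ε)/α)
        = (n:ℝ) / ((n:ℝ)^((γ+ε)/α) * (ε⁻¹)^(1/α)) := by
          rw [eq_div_iff (ne_of_gt hubpos)]
          have h1 : (ε:ℝ)^(1/α) * (ε⁻¹)^(1/α) = 1 := by
            rw [← Real.mul_rpow hεpos.le (by positivity), mul_inv_cancel₀ (ne_of_gt hεpos),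
              Real.one_rpow]
          have h2 : (n:ℝ)^((α-γ-ε)/α) * (n:ℝ)^((γ+ε)/α) = (n:ℝ) := by
            rw [← Real.rpow_add hnpos]
            have : (α-γ-ε)/α + (γ+ε)/α = 1 := by field_simp; ring
            rw [this, Real.rpow_one]
          calc ε^(1/α) * (n:ℝ)^((α-γ-ε)/α) * ((n:ℝ)^((γ+ε)/α) * (ε⁻¹)^(1/α))
              = ((n:ℝ)^((α-γ-ε)/α) * (n:ℝ)^((γ+ε)/α)) * (ε^(1/α) * (ε⁻¹)^(1/α)) := by ring
            _ = (n:ℝ) := by rw [h1, h2, mul_one]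
      _ ≤ (n:ℝ) / aSeq α γ n := by
          apply div_le_div_of_nonneg_left hnpos.le hapos haub
  apply tendsto_atTop_mono' atTop hlb
  apply Tendsto.const_mul_atTop (by positivity)
  have hδ : 0 < (α-γ-ε)/α := by
    apply div_pos _ (by linarith)
    rw [hε]; linarith
  exact (tendsto_rpow_atTop hδ).comp tendsto_natCast_atTop_atTop

lemma aSeq_div_lb (α γ : ℝ) (hα : 1 < α) (hαγ : α ≤ γ) {n : ℕ} (hn : 3 ≤ n) :
    (n:ℝ) * (Real.log n)^(1/α) ≤ aSeq α γ n := by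
  have hn1 : (1:ℝ) < (n:ℝ) := by exact_mod_cast Nat.lt_of_lt_of_le (by norm_num) hn
  have hnpos : (0:ℝ) < n := by linarith
  have hlogpos : 0 < Real.log n := Real.log_pos hn1
  have hX : (n:ℝ)^α * Real.log n ≤ (n:ℝ)^γ * Real.log n := by
    apply mul_le_mul_of_nonneg_right _ hlogpos.le
    exact Real.rpow_le_rpow_of_exponent_le hn1.le hαγ
  calc (n:ℝ) * (Real.log n)^(1/α) = ((n:ℝ)^α * Real.log n)^(1/α) := by
        rw [Real.mul_rpow (Real.rpow_nonneg hnpos.le _) hlogpos.le,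
          ← Real.rpow_mul hnpos.le]
        congr 2
        field_simp
        simp
    _ ≤ aSeq α γ n := Real.rpow_le_rpow (by positivity) hX (by positivity)

lemma ndiv_aSeq_zero (α γ : ℝ) (hα : 1 < α) (hαγ : α ≤ γ) :
    Tendsto (fun n : ℕ => (n:ℝ) / aSeq α γ n) atTop (nhds 0) := by
  have hub : ∀ᶠ n : ℕ in atTop, (n:ℝ) / aSeq α γ n ≤ ((Real.log n)^(1/α))⁻¹ := by
    filter_upwards [eventually_atTop.2 ⟨3, fun n hn => hn⟩] with n hn
    have hn1 : (1:ℝ) < (n:ℝ) := by exact_mod_cast Nat.lt_of_lt_of_le (by norm_num) hn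
    have hnpos : (0:ℝ) < n := by linarith
    have hlogpos : 0 < Real.log n := Real.log_pos hn1
    have hlb := aSeq_div_lb α γ hα hαγ hn
    have hpos : 0 < (n:ℝ) * (Real.log n)^(1/α) := by positivity
    calc (n:ℝ) / aSeq α γ n ≤ (n:ℝ) / ((n:ℝ) * (Real.log n)^(1/α)) :=
          div_le_div_of_nonneg_left hnpos.le hpos hlb
      _ = ((Real.log n)^(1/α))⁻¹ := by
          rw [div_mul_eq_div_div]
          rw [div_self (ne_of_gt hnpos)]
          rw [one_div]
  have hlb0 : ∀ᶠ n : ℕ in atTop, 0 ≤ (n:ℝ) / aSeq α γ n := by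
    filter_upwards with n
    exact div_nonneg (Nat.cast_nonneg n) (aSeq_nonneg α γ n)
  have h0 : Tendsto (fun n : ℕ => ((Real.log n)^(1/α))⁻¹) atTop (nhds 0) := by
    apply Tendsto.comp tendsto_inv_atTop_zero
    exact (tendsto_rpow_atTop (by positivity)).comp
      (Real.tendsto_log_atTop.comp tendsto_natCast_atTop_atTop)
  exact tendsto_of_tendsto_of_tendsto_of_le_of_le' tendsto_const_nhds h0 hlb0 hub

lemma aSeq_div_n_atTop (α γ : ℝ) (hα : 1 < α) (hαγ : α ≤ γ) :
    Tendsto (fun n : ℕ => aSeq α γ n / (n:ℝ)) atTop atTop := by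
  have hlb : ∀ᶠ n : ℕ in atTop, (Real.log n)^(1/α) ≤ aSeq α γ n / (n:ℝ) := by
    filter_upwards [eventually_atTop.2 ⟨3, fun n hn => hn⟩] with n hn
    have hnpos : (0:ℝ) < n := by exact_mod_cast Nat.lt_of_lt_of_le (by norm_num) hn
    rw [le_div_iff₀ hnpos]
    calc (Real.log n)^(1/α) * (n:ℝ) = (n:ℝ) * (Real.log n)^(1/α) := by ring
      _ ≤ aSeq α γ n := aSeq_div_lb α γ hα hαγ hn
  apply tendsto_atTop_mono' atTop hlb
  exact (tendsto_rpow_atTop (by positivity)).comp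
    (Real.tendsto_log_atTop.comp tendsto_natCast_atTop_atTop)


section
variable {α : ℝ}

-- integrability of the main integrand
lemma integrand_integrable (hα : 1 < α) {s : ℝ} (hs : 1 ≤ s) (C q : ℝ) (m : ℕ) :
    IntegrableOn (fun x : ℝ => α * x ^ (-α-1) * (C^m - (C - x*q)^m)) (Set.Ioc 1 s) volume := by
  apply IntegrableOn.mono_set _ Set.Ioc_subset_Icc_self
  apply ContinuousOn.integrableOn_Icc
  apply ContinuousOn.mul
  · apply ContinuousOn.mul continuousOn_const
    apply ContinuousOn.rpow_const continuousOn_id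
    intro x hx
    left
    have h1 : (1:ℝ) ≤ x := hx.1
    intro h; simp only [id] at h; rw [h] at h1; norm_num at h1
  · exact (continuousOn_const.sub (((continuousOn_const.sub
      (continuousOn_id.mul continuousOn_const)).pow m))) |>.congr (fun x _ => rfl)

lemma rpow_integrable (hα : 1 < α) {s : ℝ} (hs : 1 ≤ s) (c r : ℝ) :
    IntegrableOn (fun x : ℝ => c * x ^ (r:ℝ)) (Set.Ioc 1 s) volume := by
  apply IntegrableOn.mono_set _ Set.Ioc_subset_Icc_self
  apply ContinuousOn.integrableOn_Icc
  apply ContinuousOn.mul continuousOn_const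
  apply ContinuousOn.rpow_const continuousOn_id
  intro x hx
  left
  have h1 : (1:ℝ) ≤ x := hx.1
  intro h; simp only [id] at h; rw [h] at h1; norm_num at h1

lemma bounds_case1 (hα : 1 < α) {s : ℝ} (hs : 1 ≤ s) (m : ℕ) {C q : ℝ}
    (hC0 : 0 ≤ C) (hC1 : C ≤ 1) (hq : 0 ≤ q) (hqs : s * q ≤ C) :
    (C^m - (C - q)^m) * (1 - s ^ (-α)) ≤
      (∫ x in Set.Ioc 1 s, α * x ^ (-α-1) * (C^m - (C - x*q)^m)) ∧
    (∫ x in Set.Ioc 1 s, α * x ^ (-α-1) * (C^m - (C - x*q)^m)) ≤ 1 := by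
  have hint := integrand_integrable hα hs C q m
  have key : ∀ x ∈ Set.Ioc (1:ℝ) s, 0 ≤ C - x*q ∧ C - x*q ≤ C - q ∧ x*q ≤ s*q := by
    intro x hx
    have h1 : 1 ≤ x := le_of_lt hx.1
    have h2 : x ≤ s := hx.2
    have hxq : x*q ≤ s*q := mul_le_mul_of_nonneg_right h2 hq
    refine ⟨by linarith, by nlinarith, hxq⟩
  constructor
  · -- lower bound
    have hmono : ∀ x ∈ Set.Ioc (1:ℝ) s,
        (C^m - (C - q)^m) * (α * x ^ (-α-1)) ≤ α * x ^ (-α-1) * (C^m - (C - x*q)^m) := by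
      intro x hx
      obtain ⟨h0, h1, _⟩ := key x hx
      have hxpos : (0:ℝ) < x := lt_trans one_pos hx.1
      have hbr : (C - x*q)^m ≤ (C - q)^m := pow_le_pow_left₀ h0 h1 m
      have hr : 0 ≤ α * x ^ (-α-1) :=
        mul_nonneg (by linarith) (Real.rpow_nonneg hxpos.le _)
      nlinarith
    calc (C^m - (C - q)^m) * (1 - s ^ (-α))
        = ∫ x in Set.Ioc 1 s, (C^m - (C - q)^m) * (α * x ^ (-α-1)) := by
          rw [MeasureTheory.integral_const_mul, intA1 hα hs]
      _ ≤ _ := MeasureTheory.setIntegral_mono_on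
          (by simpa [mul_comm, IntegrableOn] using (rpow_integrable hα hs α (-α-1)).const_mul (C^m - (C - q)^m))
          hint measurableSet_Ioc hmono
  · -- upper bound
    have hmono : ∀ x ∈ Set.Ioc (1:ℝ) s,
        α * x ^ (-α-1) * (C^m - (C - x*q)^m) ≤ α * x ^ (-α-1) := by
      intro x hx
      obtain ⟨h0, _, _⟩ := key x hx
      have hxpos : (0:ℝ) < x := lt_trans one_pos hx.1
      have hr : 0 ≤ α * x ^ (-α-1) :=
        mul_nonneg (by linarith) (Real.rpow_nonneg hxpos.le _)
      have hbr : C^m - (C - x*q)^m ≤ 1 := by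
        have : (0:ℝ) ≤ (C - x*q)^m := pow_nonneg h0 m
        have : C^m ≤ 1 := pow_le_one₀ hC0 hC1
        linarith [pow_nonneg h0 m]
      nlinarith
    calc (∫ x in Set.Ioc 1 s, α * x ^ (-α-1) * (C^m - (C - x*q)^m))
        ≤ ∫ x in Set.Ioc 1 s, α * x ^ (-α-1) :=
          MeasureTheory.setIntegral_mono_on hint (rpow_integrable hα hs α (-α-1))
            measurableSet_Ioc hmono
      _ = 1 - s ^ (-α) := intA1 hα hs
      _ ≤ 1 := by
          have : 0 ≤ s ^ (-α) := Real.rpow_nonneg (by linarith) _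
          linarith

lemma bounds_case2_upper (hα : 1 < α) {s : ℝ} (hs : 1 ≤ s) (m : ℕ) {C q : ℝ}
    (hC0 : 0 ≤ C) (hC1 : C ≤ 1) (hq : 0 ≤ q) (hqs : s * q ≤ C) :
    (∫ x in Set.Ioc 1 s, α * x ^ (-α-1) * (C^m - (C - x*q)^m)) ≤
      (m:ℝ) * q * (α/(α-1) * (1 - s ^ (1-α))) := by
  have hint := integrand_integrable hα hs C q m
  have hmono : ∀ x ∈ Set.Ioc (1:ℝ) s,
      α * x ^ (-α-1) * (C^m - (C - x*q)^m) ≤ ((m:ℝ) * q) * (α * x ^ (-α)) := by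
    intro x hx
    have h1 : 1 ≤ x := le_of_lt hx.1
    have hxpos : (0:ℝ) < x := lt_trans one_pos hx.1
    have hxq : x*q ≤ s*q := mul_le_mul_of_nonneg_right hx.2 hq
    have h0 : 0 ≤ C - x*q := by linarith
    have hbd := (pow_diff_le m h0 (le_refl (C - x*q)) (by nlinarith : C - x*q ≤ C)).2
    -- C^m - (C-xq)^m ≤ m * C^(m-1) * (xq)
    have hCpow : C^(m-1) ≤ 1 := pow_le_one₀ hC0 hC1
    have hbr : C^m - (C - x*q)^m ≤ (m:ℝ) * (x*q) := by
      have h2 : (m:ℝ) * C^(m-1) * (C - (C - x*q)) ≤ (m:ℝ) * (x*q) := by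
        have : C - (C - x*q) = x*q := by ring
        rw [this]
        have hxq0 : 0 ≤ x*q := mul_nonneg hxpos.le hq
        exact mul_le_mul_of_nonneg_right
          (mul_le_of_le_one_right (Nat.cast_nonneg m) hCpow) hxq0
      linarith
    have hxr : (0:ℝ) ≤ α * x ^ (-α-1) :=
      mul_nonneg (by linarith) (Real.rpow_nonneg hxpos.le _)
    have hxrw : x ^ (-α-1) * x = x ^ (-α) := by
      rw [← Real.rpow_add_one (ne_of_gt hxpos)]
      ring_nf
    calc α * x ^ (-α-1) * (C^m - (C - x*q)^m) ≤ α * x ^ (-α-1) * ((m:ℝ) * (x*q)) := by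
          nlinarith
      _ = ((m:ℝ) * q) * (α * x ^ (-α)) := by
          rw [← hxrw]; ring
  calc (∫ x in Set.Ioc 1 s, α * x ^ (-α-1) * (C^m - (C - x*q)^m))
      ≤ ∫ x in Set.Ioc 1 s, ((m:ℝ) * q) * (α * x ^ (-α)) :=
        MeasureTheory.setIntegral_mono_on hint
          (by simpa [mul_assoc, IntegrableOn] using (rpow_integrable hα hs α (-α)).const_mul ((m:ℝ)*q))
          measurableSet_Ioc hmono
    _ = (m:ℝ) * q * (α/(α-1) * (1 - s ^ (1-α))) := by
        rw [MeasureTheory.integral_const_mul, intA2 hα hs]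

lemma bounds_case2_lower (hα : 1 < α) {s t : ℝ} (hs : 1 ≤ s) (ht : 1 ≤ t) (hts : t ≤ s)
    (m : ℕ) {C q : ℝ} (hC0 : 0 ≤ C) (hC1 : C ≤ 1) (hq : 0 ≤ q) (hqs : s * q ≤ C) :
    (m:ℝ) * q * (C - t*q)^(m-1) * (α/(α-1) * (1 - t ^ (1-α))) ≤
      (∫ x in Set.Ioc 1 s, α * x ^ (-α-1) * (C^m - (C - x*q)^m)) := by
  have hint := integrand_integrable hα hs C q m
  have hintt := integrand_integrable hα ht C q m
  have hw0 : 0 ≤ C - t*q := by nlinarith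
  have step1 : (∫ x in Set.Ioc 1 t, α * x ^ (-α-1) * (C^m - (C - x*q)^m)) ≤
      (∫ x in Set.Ioc 1 s, α * x ^ (-α-1) * (C^m - (C - x*q)^m)) := by
    apply MeasureTheory.setIntegral_mono_set hint
    · filter_upwards [MeasureTheory.ae_restrict_mem measurableSet_Ioc] with x hx
      have h1 : 1 ≤ x := le_of_lt hx.1
      have hxpos : (0:ℝ) < x := lt_trans one_pos hx.1
      have hxq : x*q ≤ s*q := mul_le_mul_of_nonneg_right hx.2 hq
      have h0 : 0 ≤ C - x*q := by linarith
      have hbr : (C - x*q)^m ≤ C^m :=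
        pow_le_pow_left₀ h0 (by nlinarith) m
      have hxr : (0:ℝ) ≤ α * x ^ (-α-1) :=
        mul_nonneg (by linarith) (Real.rpow_nonneg hxpos.le _)
      simp only [Pi.zero_apply]
      nlinarith
    · exact HasSubset.Subset.eventuallyLE (Set.Ioc_subset_Ioc_right hts)
  have step2 : (m:ℝ) * q * (C - t*q)^(m-1) * (α/(α-1) * (1 - t ^ (1-α))) ≤
      (∫ x in Set.Ioc 1 t, α * x ^ (-α-1) * (C^m - (C - x*q)^m)) := by
    have hmono : ∀ x ∈ Set.Ioc (1:ℝ) t,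
        ((m:ℝ) * q * (C - t*q)^(m-1)) * (α * x ^ (-α)) ≤
          α * x ^ (-α-1) * (C^m - (C - x*q)^m) := by
      intro x hx
      have h1 : 1 ≤ x := le_of_lt hx.1
      have hxpos : (0:ℝ) < x := lt_trans one_pos hx.1
      have hxq : x*q ≤ t*q := mul_le_mul_of_nonneg_right hx.2 hq
      have hxq1 : q ≤ x*q := by nlinarith
      have hu0 : C - t*q ≤ C - x*q := by linarith
      have hbd := (pow_diff_le m hw0 hu0 (by nlinarith : C - x*q ≤ C)).1
      -- m * (C-tq)^(m-1) * (C - (C - xq)) ≤ C^m - (C-xq)^m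
      have hrw : C - (C - x*q) = x*q := by ring
      rw [hrw] at hbd
      have hxrw : x ^ (-α-1) * x = x ^ (-α) := by
        rw [← Real.rpow_add_one (ne_of_gt hxpos)]
        ring_nf
      have hxr : (0:ℝ) ≤ α * x ^ (-α-1) :=
        mul_nonneg (by linarith) (Real.rpow_nonneg hxpos.le _)
      calc ((m:ℝ) * q * (C - t*q)^(m-1)) * (α * x ^ (-α))
          = (α * x ^ (-α-1)) * ((m:ℝ) * (C - t*q)^(m-1) * (x*q)) := by
            rw [← hxrw]; ring
        _ ≤ (α * x ^ (-α-1)) * (C^m - (C - x*q)^m) := by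
            apply mul_le_mul_of_nonneg_left _ hxr
            calc (m:ℝ) * (C - t*q)^(m-1) * (x*q)
                = (m:ℝ) * (C - t*q)^(m-1) * (x*q) := rfl
              _ ≤ C^m - (C - x*q)^m := hbd
    calc (m:ℝ) * q * (C - t*q)^(m-1) * (α/(α-1) * (1 - t ^ (1-α)))
        = ∫ x in Set.Ioc 1 t, ((m:ℝ) * q * (C - t*q)^(m-1)) * (α * x ^ (-α)) := by
          rw [MeasureTheory.integral_const_mul, intA2 hα ht]
      _ ≤ _ := MeasureTheory.setIntegral_mono_on
          (by simpa [mul_assoc, IntegrableOn] using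
            (rpow_integrable hα ht α (-α)).const_mul ((m:ℝ) * q * (C - t*q)^(m-1)))
          hintt measurableSet_Ioc hmono
  linarith
end



lemma Fn_repr {α : ℝ} (hα : 1 < α) {a : ℝ} (ha : 1 ≤ a) (m : ℕ) :
    (∫ x in Set.Ioc 1 (Real.sqrt a), α * x ^ (-α - 1) *
      ((1 - a ^ (-α/2)) ^ m -
        (∫ y in Set.Ioc 1 (Real.sqrt a), (1 - x * y / a) * (α * y ^ (-α - 1))) ^ m))
    = ∫ x in Set.Ioc 1 (Real.sqrt a),
        α * x ^ (-α-1) * ((1 - a^(-α/2))^m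
          - ((1 - a^(-α/2)) - x*(α/(α-1)*(1 - (Real.sqrt a)^(1-α))/a))^m) := by
  have ha0 : (0:ℝ) < a := lt_of_lt_of_le one_pos ha
  have hs : 1 ≤ Real.sqrt a := Real.one_le_sqrt.2 ha
  have hsb : (Real.sqrt a) ^ (-α) = a ^ (-α/2) := by
    rw [Real.sqrt_eq_rpow, ← Real.rpow_mul ha0.le]
    congr 1
    ring
  apply MeasureTheory.setIntegral_congr_fun measurableSet_Ioc
  intro x hx
  dsimp only
  rw [intB hα hs ha0 x, hsb]
  congr 2
  ring

set_option maxHeartbeats 2000000 in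
theorem stmt18 (α γ : ℝ) (hα : 1 < α) (hγ : 2 < γ) :
    (γ < α → Tendsto (fun n : ℕ =>
      ∫ x in Set.Ioc 1 (Real.sqrt (aSeq α γ n)),
        α * x ^ (-α - 1) *
          ((1 - (aSeq α γ n) ^ (-α/2)) ^ (n - 1) -
            (∫ y in Set.Ioc 1 (Real.sqrt (aSeq α γ n)),
              (1 - x * y / aSeq α γ n) * (α * y ^ (-α - 1))) ^ (n - 1)))
      atTop (nhds 1)) ∧
    (α ≤ γ → Tendsto (fun n : ℕ =>
      (∫ x in Set.Ioc 1 (Real.sqrt (aSeq α γ n)),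
        α * x ^ (-α - 1) *
          ((1 - (aSeq α γ n) ^ (-α/2)) ^ (n - 1) -
            (∫ y in Set.Ioc 1 (Real.sqrt (aSeq α γ n)),
              (1 - x * y / aSeq α γ n) * (α * y ^ (-α - 1))) ^ (n - 1)))
      / ((α/(α-1))^2 * (n : ℝ) / aSeq α γ n)) atTop (nhds 1)) := by
  have hα1 : (0:ℝ) < α - 1 := by linarith
  have hαα : (1:ℝ) < α/(α-1) := by
    rw [lt_div_iff₀ hα1]; linarith
  -- common limit facts
  have hA : Tendsto (fun n : ℕ => aSeq α γ n) atTop atTop :=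
    aSeq_tendsto α γ (by linarith) (by linarith)
  have hb0 : Tendsto (fun n : ℕ => (aSeq α γ n) ^ (-α/2)) atTop (nhds 0) := by
    refine ((tendsto_rpow_neg_atTop (show (0:ℝ) < α/2 by linarith)).comp hA).congr fun n => ?_
    simp only [Function.comp]
    congr 1
    ring
  have hnb : Tendsto (fun n : ℕ => (n:ℝ) * (aSeq α γ n) ^ (-α/2)) atTop (nhds 0) :=
    nmul_aSeq_tendsto α γ (by linarith) hγ
  have hS : Tendsto (fun n : ℕ => Real.sqrt (aSeq α γ n)) atTop atTop := by
    refine ((tendsto_rpow_atTop (show (0:ℝ) < 1/2 by norm_num)).comp hA).congr fun n => ?_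
    simp only [Function.comp]
    rw [Real.sqrt_eq_rpow]
  have hK : Tendsto (fun n : ℕ => α/(α-1) * (1 - (Real.sqrt (aSeq α γ n))^(1-α)))
      atTop (nhds (α/(α-1))) := by
    have h1 : Tendsto (fun n : ℕ => (Real.sqrt (aSeq α γ n))^(1-α)) atTop (nhds 0) := by
      refine ((tendsto_rpow_neg_atTop (show (0:ℝ) < α-1 by linarith)).comp hS).congr fun n => ?_
      simp only [Function.comp]
      congr 1
      ring
    have := (tendsto_const_nhds (x := α/(α-1)) (f := atTop (α := ℕ))).mul
      ((tendsto_const_nhds (x := (1:ℝ)) (f := atTop (α := ℕ))).sub h1)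
    simpa using this
  -- eventual basic facts
  have hEv : ∀ᶠ n : ℕ in atTop,
      1 ≤ aSeq α γ n ∧ 1 ≤ Real.sqrt (aSeq α γ n) ∧
      (aSeq α γ n) ^ (-α/2) ≤ 1/2 ∧ 0 ≤ (aSeq α γ n) ^ (-α/2) ∧
      1 ≤ α/(α-1) * (1 - (Real.sqrt (aSeq α γ n))^(1-α)) ∧
      α/(α-1) * (1 - (Real.sqrt (aSeq α γ n))^(1-α)) ≤ α/(α-1) ∧
      α/(α-1) * (1 - (Real.sqrt (aSeq α γ n))^(1-α)) / Real.sqrt (aSeq α γ n) ≤ 1/2 ∧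
      1 ≤ n := by
    have e1 := hA.eventually (eventually_ge_atTop (1:ℝ))
    have e2 := hb0.eventually (eventually_lt_nhds (show (0:ℝ) < 1/2 by norm_num))
    have e3 := hK.eventually (eventually_gt_nhds hαα)
    have e4 : Tendsto (fun n : ℕ =>
        α/(α-1) * (1 - (Real.sqrt (aSeq α γ n))^(1-α)) / Real.sqrt (aSeq α γ n))
        atTop (nhds 0) := hK.div_atTop hS
    have e5 := e4.eventually (eventually_lt_nhds (show (0:ℝ) < 1/2 by norm_num))
    filter_upwards [e1, e2, e3, e5, eventually_ge_atTop 1] with n h1 h2 h3 h5 h6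
    have hs1 : 1 ≤ Real.sqrt (aSeq α γ n) := Real.one_le_sqrt.2 h1
    have hb0' : 0 ≤ (aSeq α γ n) ^ (-α/2) :=
      Real.rpow_nonneg (by linarith) _
    have hK2 : α/(α-1) * (1 - (Real.sqrt (aSeq α γ n))^(1-α)) ≤ α/(α-1) := by
      have h7 : 0 ≤ (Real.sqrt (aSeq α γ n))^(1-α) :=
        Real.rpow_nonneg (by linarith) _
      nlinarith
    exact ⟨h1, hs1, h2.le, hb0', h3.le, hK2, h5.le, h6⟩
  constructor
  · -- case γ < α
    intro hγα
    have hna : Tendsto (fun n : ℕ => (n:ℝ) / aSeq α γ n) atTop atTop :=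
      ndiv_aSeq_atTop α γ hα hγ hγα
    have hma : Tendsto (fun n : ℕ => ((n-1:ℕ):ℝ) / aSeq α γ n) atTop atTop := by
      have hev : ∀ᶠ n : ℕ in atTop,
          (n:ℝ)/aSeq α γ n + (-1) ≤ ((n-1:ℕ):ℝ) / aSeq α γ n := by
        filter_upwards [hA.eventually (eventually_ge_atTop (1:ℝ)), eventually_ge_atTop 1]
          with n h1 h2
        have ha0 : (0:ℝ) < aSeq α γ n := by linarith
        have hc : ((n-1:ℕ):ℝ) = (n:ℝ) - 1 := by
          rw [Nat.cast_sub h2, Nat.cast_one]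
        rw [hc, sub_div]
        have : 1 / aSeq α γ n ≤ 1 := by
          rw [div_le_one ha0]; linarith
        linarith
      exact tendsto_atTop_mono' atTop hev (tendsto_atTop_add_const_right atTop (-1) hna)
    -- lower sequence tends to 1
    set b : ℕ → ℝ := fun n => (aSeq α γ n) ^ (-α/2) with hbdef
    set K : ℕ → ℝ := fun n => α/(α-1) * (1 - (Real.sqrt (aSeq α γ n))^(1-α)) with hKdef
    set q : ℕ → ℝ := fun n => K n / aSeq α γ n with hqdef
    set C : ℕ → ℝ := fun n => 1 - b n with hCdef
    have hC1 : Tendsto C atTop (nhds 1) := by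
      have := (tendsto_const_nhds (x := (1:ℝ)) (f := atTop (α := ℕ))).sub hb0
      simpa using this
    have hCm : Tendsto (fun n : ℕ => (C n)^(n-1)) atTop (nhds 1) := by
      apply tendsto_of_tendsto_of_tendsto_of_le_of_le'
        (g := fun n : ℕ => 1 - (n:ℝ) * b n) (h := fun _ : ℕ => (1:ℝ))
      · have := (tendsto_const_nhds (x := (1:ℝ)) (f := atTop (α := ℕ))).sub hnb
        simpa using this
      · exact tendsto_const_nhds
      · filter_upwards [hEv] with n hE
        obtain ⟨h1, hs1, hb2, hb0', _, _, _, hn1⟩ := hE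
        have hber : 1 + ((n-1:ℕ):ℝ) * (-(b n)) ≤ (1 - b n)^(n-1) := by
          have := one_add_mul_le_pow (a := -(b n)) (by simp only [hbdef]; linarith) (n-1)
          simpa [sub_eq_add_neg] using this
        have hcast : ((n-1:ℕ):ℝ) ≤ (n:ℝ) := by
          exact_mod_cast Nat.cast_le.2 (Nat.sub_le n 1)
        have : (n:ℝ) * b n ≥ ((n-1:ℕ):ℝ) * b n :=
          mul_le_mul_of_nonneg_right hcast (by simpa [hbdef] using hb0')
        simp only [hCdef]
        nlinarith
      · filter_upwards [hEv] with n hE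
        obtain ⟨h1, hs1, hb2, hb0', _, _, _, hn1⟩ := hE
        exact pow_le_one₀ (by simp only [hCdef, hbdef]; linarith) (by simp only [hCdef, hbdef]; linarith)
    have hCq : Tendsto (fun n : ℕ => (C n - q n)^(n-1)) atTop (nhds 0) := by
      apply tendsto_of_tendsto_of_tendsto_of_le_of_le'
        (g := fun _ : ℕ => (0:ℝ))
        (h := fun n : ℕ => Real.exp (-(((n-1:ℕ):ℝ) / aSeq α γ n)))
      · exact tendsto_const_nhds
      · exact Real.tendsto_exp_atBot.comp (tendsto_neg_atBot_iff.mpr hma)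
      · filter_upwards [hEv] with n hE
        obtain ⟨h1, hs1, hb2, hb0', hK1, hKub, hKs, hn1⟩ := hE
        have ha0 : (0:ℝ) < aSeq α γ n := by linarith
        have hq0 : 0 ≤ q n := by
          apply div_nonneg _ ha0.le
          simp only [hKdef]; linarith
        have hmss : Real.sqrt (aSeq α γ n) * Real.sqrt (aSeq α γ n) = aSeq α γ n :=
          Real.mul_self_sqrt (by linarith)
        have hsq : Real.sqrt (aSeq α γ n) * q n ≤ C n := by
          have heq : Real.sqrt (aSeq α γ n) * q n
              = K n / Real.sqrt (aSeq α γ n) := by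
            simp only [hqdef]
            rw [eq_div_iff (by linarith : Real.sqrt (aSeq α γ n) ≠ 0)]
            field_simp
            linear_combination (K n) * hmss
          rw [heq]
          simp only [hCdef]
          linarith [hKs]
        have hq1 : q n ≤ Real.sqrt (aSeq α γ n) * q n := by
          nlinarith
        have h0Cq : 0 ≤ C n - q n := by linarith
        apply pow_nonneg h0Cq
      · filter_upwards [hEv] with n hE
        obtain ⟨h1, hs1, hb2, hb0', hK1, hKub, hKs, hn1⟩ := hE
        have ha0 : (0:ℝ) < aSeq α γ n := by linarith
        have hmss : Real.sqrt (aSeq α γ n) * Real.sqrt (aSeq α γ n) = aSeq α γ n :=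
          Real.mul_self_sqrt (by linarith)
        have hsq : Real.sqrt (aSeq α γ n) * q n ≤ C n := by
          have heq : Real.sqrt (aSeq α γ n) * q n = K n / Real.sqrt (aSeq α γ n) := by
            simp only [hqdef]
            rw [eq_div_iff (by linarith : Real.sqrt (aSeq α γ n) ≠ 0)]
            field_simp
            linear_combination (K n) * hmss
          rw [heq]
          simp only [hCdef]
          linarith [hKs]
        have hq0 : 0 ≤ q n := div_nonneg (by simp only [hKdef]; linarith) ha0.le
        have hq1 : q n ≤ Real.sqrt (aSeq α γ n) * q n := by nlinarith
        have h0Cq : 0 ≤ C n - q n := by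
          simp only [hCdef] at *
          linarith
        have hqlb : 1/aSeq α γ n ≤ q n := by
          simp only [hqdef]
          exact (div_le_div_iff_of_pos_right ha0).2 hK1
        have hstep1 : C n - q n ≤ 1 - 1/aSeq α γ n := by
          simp only [hCdef]
          linarith
        have hia : 1/aSeq α γ n ≤ 1 := by
          rw [div_le_one ha0]; linarith
        have hstep2 : 1 - 1/aSeq α γ n ≤ Real.exp (-(1/aSeq α γ n)) := by
          linarith [Real.add_one_le_exp (-(1/aSeq α γ n))]
        calc (C n - q n)^(n-1) ≤ (1 - 1/aSeq α γ n)^(n-1) :=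
              pow_le_pow_left₀ h0Cq hstep1 _
          _ ≤ (Real.exp (-(1/aSeq α γ n)))^(n-1) :=
              pow_le_pow_left₀ (by linarith) hstep2 _
          _ = Real.exp (-(((n-1:ℕ):ℝ) / aSeq α γ n)) := by
              rw [← Real.exp_nat_mul]
              congr 1
              ring
    -- final squeeze
    apply tendsto_of_tendsto_of_tendsto_of_le_of_le'
      (g := fun n : ℕ => ((C n)^(n-1) - (C n - q n)^(n-1)) * C n)
      (h := fun _ : ℕ => (1:ℝ))
    · have := (hCm.sub hCq).mul hC1
      simpa using this
    · exact tendsto_const_nhds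
    · filter_upwards [hEv] with n hE
      obtain ⟨h1, hs1, hb2, hb0', hK1, hKub, hKs, hn1⟩ := hE
      have ha0 : (0:ℝ) < aSeq α γ n := by linarith
      have hmss : Real.sqrt (aSeq α γ n) * Real.sqrt (aSeq α γ n) = aSeq α γ n :=
        Real.mul_self_sqrt (by linarith)
      have hsb : (Real.sqrt (aSeq α γ n)) ^ (-α) = (aSeq α γ n) ^ (-α/2) := by
        rw [Real.sqrt_eq_rpow, ← Real.rpow_mul ha0.le]
        congr 1
        ring
      have hsq : Real.sqrt (aSeq α γ n) * (q n) ≤ C n := by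
        have heq : Real.sqrt (aSeq α γ n) * q n = K n / Real.sqrt (aSeq α γ n) := by
          simp only [hqdef]
          rw [eq_div_iff (by linarith : Real.sqrt (aSeq α γ n) ≠ 0)]
          field_simp
          linear_combination (K n) * hmss
        rw [heq]
        simp only [hCdef]
        linarith [hKs]
      have hq0 : 0 ≤ q n := div_nonneg (by simp only [hKdef]; linarith) ha0.le
      have hC0 : 0 ≤ C n := by simp only [hCdef]; linarith
      have hC1' : C n ≤ 1 := by simp only [hCdef]; linarith
      rw [Fn_repr hα h1 (n-1)]
      have hbd := (bounds_case1 (s := Real.sqrt (aSeq α γ n)) hα hs1 (n-1)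
        (C := C n) (q := q n) hC0 hC1' hq0 hsq).1
      have hCint : 1 - (Real.sqrt (aSeq α γ n)) ^ (-α) = C n := by
        rw [hsb]
      rw [hCint] at hbd
      calc ((C n)^(n-1) - (C n - q n)^(n-1)) * C n ≤
          ∫ x in Set.Ioc 1 (Real.sqrt (aSeq α γ n)),
            α * x ^ (-α-1) * ((C n)^(n-1) - (C n - x * q n)^(n-1)) := hbd
        _ = _ := by
          apply MeasureTheory.setIntegral_congr_fun measurableSet_Ioc
          intro x hx
          simp only [hCdef, hqdef, hKdef, hbdef]
    · filter_upwards [hEv] with n hE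
      obtain ⟨h1, hs1, hb2, hb0', hK1, hKub, hKs, hn1⟩ := hE
      have ha0 : (0:ℝ) < aSeq α γ n := by linarith
      have hmss : Real.sqrt (aSeq α γ n) * Real.sqrt (aSeq α γ n) = aSeq α γ n :=
        Real.mul_self_sqrt (by linarith)
      have hsq : Real.sqrt (aSeq α γ n) * (q n) ≤ C n := by
        have heq : Real.sqrt (aSeq α γ n) * q n = K n / Real.sqrt (aSeq α γ n) := by
          simp only [hqdef]
          rw [eq_div_iff (by linarith : Real.sqrt (aSeq α γ n) ≠ 0)]
          field_simp
          linear_combination (K n) * hmss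
        rw [heq]
        simp only [hCdef]
        linarith [hKs]
      have hq0 : 0 ≤ q n := div_nonneg (by simp only [hKdef]; linarith) ha0.le
      have hC0 : 0 ≤ C n := by simp only [hCdef]; linarith
      have hC1' : C n ≤ 1 := by simp only [hCdef]; linarith
      rw [Fn_repr hα h1 (n-1)]
      have hbd := (bounds_case1 (s := Real.sqrt (aSeq α γ n)) hα hs1 (n-1)
        (C := C n) (q := q n) hC0 hC1' hq0 hsq).2
      calc (∫ x in Set.Ioc 1 (Real.sqrt (aSeq α γ n)),
            α * x ^ (-α-1) * ((1 - (aSeq α γ n)^(-α/2))^(n-1)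
              - ((1 - (aSeq α γ n)^(-α/2))
                  - x*(α/(α-1)*(1 - (Real.sqrt (aSeq α γ n))^(1-α))/aSeq α γ n))^(n-1)))
          = ∫ x in Set.Ioc 1 (Real.sqrt (aSeq α γ n)),
            α * x ^ (-α-1) * ((C n)^(n-1) - (C n - x * q n)^(n-1)) := by
            apply MeasureTheory.setIntegral_congr_fun measurableSet_Ioc
            intro x hx
            simp only [hCdef, hqdef, hKdef, hbdef]
        _ ≤ 1 := hbd
  · intro hαγ
    have hna0 : Tendsto (fun n : ℕ => (n:ℝ) / aSeq α γ n) atTop (nhds 0) :=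
      ndiv_aSeq_zero α γ hα hαγ
    have hAn : Tendsto (fun n : ℕ => aSeq α γ n / (n:ℝ)) atTop atTop :=
      aSeq_div_n_atTop α γ hα hαγ
    have hT : Tendsto (fun n : ℕ => Real.sqrt (aSeq α γ n / (n:ℝ))) atTop atTop := by
      refine ((tendsto_rpow_atTop (show (0:ℝ) < 1/2 by norm_num)).comp hAn).congr fun n => ?_
      simp only [Function.comp]
      rw [Real.sqrt_eq_rpow]
    have hsqna : Tendsto (fun n : ℕ => Real.sqrt ((n:ℝ) / aSeq α γ n)) atTop (nhds 0) := by
      have hcont : Tendsto Real.sqrt (nhds 0) (nhds 0) := by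
        have := Real.continuous_sqrt.tendsto 0
        rwa [Real.sqrt_zero] at this
      exact hcont.comp hna0
    set b : ℕ → ℝ := fun n => (aSeq α γ n) ^ (-α/2) with hbdef
    set K : ℕ → ℝ := fun n => α/(α-1) * (1 - (Real.sqrt (aSeq α γ n))^(1-α)) with hKdef
    set q : ℕ → ℝ := fun n => K n / aSeq α γ n with hqdef
    set C : ℕ → ℝ := fun n => 1 - b n with hCdef
    set t : ℕ → ℝ := fun n => Real.sqrt (aSeq α γ n / (n:ℝ)) with htdef
    set Kt : ℕ → ℝ := fun n => α/(α-1) * (1 - (t n)^(1-α)) with hKtdef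
    have hKt : Tendsto Kt atTop (nhds (α/(α-1))) := by
      have h1 : Tendsto (fun n : ℕ => (t n)^(1-α)) atTop (nhds 0) := by
        refine ((tendsto_rpow_neg_atTop (show (0:ℝ) < α-1 by linarith)).comp hT).congr
          fun n => ?_
        simp only [Function.comp, htdef]
        congr 1
        ring
      have := (tendsto_const_nhds (x := α/(α-1)) (f := atTop (α := ℕ))).mul
        ((tendsto_const_nhds (x := (1:ℝ)) (f := atTop (α := ℕ))).sub h1)
      simpa [hKtdef] using this
    -- identity n·t/a = √(n/a)
    have hid : ∀ᶠ n : ℕ in atTop,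
        (n:ℝ) * t n / aSeq α γ n = Real.sqrt ((n:ℝ) / aSeq α γ n) := by
      filter_upwards [hA.eventually (eventually_ge_atTop (1:ℝ)), eventually_ge_atTop 1]
        with n h1 hn1
      have ha0 : (0:ℝ) < aSeq α γ n := by linarith
      have hn0 : (0:ℝ) < (n:ℝ) := by exact_mod_cast hn1
      have hsa : Real.sqrt (aSeq α γ n) * Real.sqrt (aSeq α γ n) = aSeq α γ n :=
        Real.mul_self_sqrt ha0.le
      have hsn : Real.sqrt (n:ℝ) * Real.sqrt (n:ℝ) = (n:ℝ) :=
        Real.mul_self_sqrt hn0.le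
      have hsa0 : (0:ℝ) < Real.sqrt (aSeq α γ n) := Real.sqrt_pos.2 ha0
      have hsn0 : (0:ℝ) < Real.sqrt (n:ℝ) := Real.sqrt_pos.2 hn0
      simp only [htdef]
      rw [Real.sqrt_div ha0.le, Real.sqrt_div hn0.le]
      rw [div_eq_div_iff ha0.ne' hsa0.ne']
      field_simp
      linear_combination (n:ℝ) * hsa - aSeq α γ n * hsn
    have hnε : Tendsto (fun n : ℕ => (n:ℝ) * (b n + t n * q n)) atTop (nhds 0) := by
      apply Tendsto.congr' (f₁ := fun n : ℕ =>
        (n:ℝ) * b n + Real.sqrt ((n:ℝ)/aSeq α γ n) * K n)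
      · filter_upwards [hid, hA.eventually (eventually_ge_atTop (1:ℝ))] with n hidn h1
        have ha0 : (0:ℝ) < aSeq α γ n := by linarith
        have : (n:ℝ) * (t n * q n) = ((n:ℝ) * t n / aSeq α γ n) * K n := by
          simp only [hqdef]
          field_simp
        rw [mul_add, this, hidn]
      · have := hnb.add (hsqna.mul hK)
        simpa using this
    have hεEv : ∀ᶠ n : ℕ in atTop,
        0 ≤ b n + t n * q n ∧ b n + t n * q n ≤ 1/2 ∧
        (n:ℝ) * (b n + t n * q n) ≤ 1/2 ∧ 1 ≤ t n ∧
        t n ≤ Real.sqrt (aSeq α γ n) := by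
      filter_upwards [hEv, hnε.eventually (eventually_lt_nhds (show (0:ℝ) < 1/2 by norm_num)),
        hT.eventually (eventually_ge_atTop (1:ℝ)), eventually_ge_atTop 1] with n hE hn2 ht1 hn1
      obtain ⟨h1, hs1, hb2, hb0', hK1, hKub, hKs, _⟩ := hE
      have ha0 : (0:ℝ) < aSeq α γ n := by linarith
      have hn0 : (1:ℝ) ≤ (n:ℝ) := by exact_mod_cast hn1
      have hq0 : 0 ≤ q n := div_nonneg (by simp only [hKdef]; linarith) ha0.le
      have ht0 : 0 ≤ t n := le_trans zero_le_one ht1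
      have hε0 : 0 ≤ b n + t n * q n := by
        have := mul_nonneg ht0 hq0
        simp only [hbdef] at *
        linarith
      have hε1 : b n + t n * q n ≤ (n:ℝ) * (b n + t n * q n) := by
        nlinarith
      have hts : t n ≤ Real.sqrt (aSeq α γ n) := by
        simp only [htdef]
        apply Real.sqrt_le_sqrt
        exact div_le_self ha0.le hn0
      exact ⟨hε0, by linarith, hn2.le, ht1, hts⟩
    have hw1 : Tendsto (fun n : ℕ => (C n - t n * q n)^(n-1-1)) atTop (nhds 1) := by
      apply tendsto_of_tendsto_of_tendsto_of_le_of_le'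
        (g := fun n : ℕ => 1 - (n:ℝ) * (b n + t n * q n)) (h := fun _ : ℕ => (1:ℝ))
      · have := (tendsto_const_nhds (x := (1:ℝ)) (f := atTop (α := ℕ))).sub hnε
        simpa using this
      · exact tendsto_const_nhds
      · filter_upwards [hεEv, eventually_ge_atTop 1] with n hE hn1
        obtain ⟨hε0, hε2, hnε2, ht1, hts⟩ := hE
        have hCw : C n - t n * q n = 1 - (b n + t n * q n) := by
          simp only [hCdef]; ring
        rw [hCw]
        have hber := one_add_mul_le_pow (a := -(b n + t n * q n)) (by linarith) (n-1-1)
        have hcast : ((n-1-1:ℕ):ℝ) ≤ (n:ℝ) := by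
          exact_mod_cast Nat.cast_le.2 (le_trans (Nat.sub_le _ 1) (Nat.sub_le n 1))
        have h3 : ((n-1-1:ℕ):ℝ) * (b n + t n * q n) ≤ (n:ℝ) * (b n + t n * q n) :=
          mul_le_mul_of_nonneg_right hcast hε0
        have h4 : 1 + ((n-1-1:ℕ):ℝ) * (-(b n + t n * q n))
            = 1 - ((n-1-1:ℕ):ℝ) * (b n + t n * q n) := by ring
        rw [h4] at hber
        have h5 : (1 + -(b n + t n * q n)) = 1 - (b n + t n * q n) := by ring
        rw [h5] at hber
        linarith
      · filter_upwards [hεEv] with n hE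
        obtain ⟨hε0, hε2, hnε2, ht1, hts⟩ := hE
        have hCw : C n - t n * q n = 1 - (b n + t n * q n) := by
          simp only [hCdef]; ring
        rw [hCw]
        exact pow_le_one₀ (by linarith) (by linarith)
    have hmn : Tendsto (fun n : ℕ => ((n-1:ℕ):ℝ) / (n:ℝ)) atTop (nhds 1) := by
      apply Tendsto.congr' (f₁ := fun n : ℕ => 1 - 1/(n:ℝ))
      · filter_upwards [eventually_ge_atTop 1] with n hn1
        have hn0 : (0:ℝ) < (n:ℝ) := by exact_mod_cast hn1
        rw [Nat.cast_sub hn1, Nat.cast_one]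
        field_simp
      · have := (tendsto_const_nhds (x := (1:ℝ)) (f := atTop (α := ℕ))).sub
          tendsto_one_div_atTop_nhds_zero_nat
        simpa using this
    -- the lower ratio sequence
    have hlimℓ : Tendsto (fun n : ℕ =>
        (((n-1:ℕ):ℝ)/(n:ℝ)) * (K n * ((α-1)/α)) * (Kt n * ((α-1)/α))
          * (C n - t n * q n)^(n-1-1)) atTop (nhds 1) := by
      have hK' : Tendsto (fun n : ℕ => K n * ((α-1)/α)) atTop (nhds 1) := by
        have := hK.mul_const ((α-1)/α)
        have heq : α/(α-1) * ((α-1)/α) = 1 := by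
          field_simp
        rwa [heq] at this
      have hKt' : Tendsto (fun n : ℕ => Kt n * ((α-1)/α)) atTop (nhds 1) := by
        have := hKt.mul_const ((α-1)/α)
        have heq : α/(α-1) * ((α-1)/α) = 1 := by
          field_simp
        rwa [heq] at this
      have := ((hmn.mul hK').mul hKt').mul hw1
      simpa using this
    apply tendsto_of_tendsto_of_tendsto_of_le_of_le' hlimℓ
      (tendsto_const_nhds (x := (1:ℝ)) (f := atTop (α := ℕ)))
    · -- lower bound
      filter_upwards [hEv, hεEv, eventually_ge_atTop 2] with n hE hE2 hn2
      obtain ⟨h1, hs1, hb2, hb0', hK1, hKub, hKs, hn1⟩ := hE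
      obtain ⟨hε0, hε2, hnε2, ht1, hts⟩ := hE2
      have ha0 : (0:ℝ) < aSeq α γ n := by linarith
      have hn0 : (0:ℝ) < (n:ℝ) := by exact_mod_cast hn1
      have hmss : Real.sqrt (aSeq α γ n) * Real.sqrt (aSeq α γ n) = aSeq α γ n :=
        Real.mul_self_sqrt (by linarith)
      have hq0 : 0 ≤ q n := div_nonneg (by simp only [hKdef]; linarith) ha0.le
      have hC0 : 0 ≤ C n := by simp only [hCdef]; linarith
      have hC1' : C n ≤ 1 := by simp only [hCdef]; linarith
      have hsq : Real.sqrt (aSeq α γ n) * (q n) ≤ C n := by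
        have heq : Real.sqrt (aSeq α γ n) * q n = K n / Real.sqrt (aSeq α γ n) := by
          simp only [hqdef]
          rw [eq_div_iff (by linarith : Real.sqrt (aSeq α γ n) ≠ 0)]
          field_simp
          linear_combination (K n) * hmss
        rw [heq]
        simp only [hCdef]
        linarith [hKs]
      have hD : (0:ℝ) < (α/(α-1))^2 * (n:ℝ) / aSeq α γ n := by
        apply div_pos _ ha0
        apply mul_pos _ hn0
        positivity
      have hbd := bounds_case2_lower (s := Real.sqrt (aSeq α γ n)) (t := t n)
        hα hs1 ht1 hts (n-1) (C := C n) (q := q n) hC0 hC1' hq0 hsq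
      rw [Fn_repr hα h1 (n-1)]
      have hintC : (∫ x in Set.Ioc 1 (Real.sqrt (aSeq α γ n)),
            α * x ^ (-α-1) * ((1 - (aSeq α γ n)^(-α/2))^(n-1)
              - ((1 - (aSeq α γ n)^(-α/2))
                  - x*(α/(α-1)*(1 - (Real.sqrt (aSeq α γ n))^(1-α))/aSeq α γ n))^(n-1)))
          = ∫ x in Set.Ioc 1 (Real.sqrt (aSeq α γ n)),
            α * x ^ (-α-1) * ((C n)^(n-1) - (C n - x * q n)^(n-1)) := by
        apply MeasureTheory.setIntegral_congr_fun measurableSet_Ioc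
        intro x hx
        simp only [hCdef, hqdef, hKdef, hbdef]
      rw [hintC]
      have hℓeq : (((n-1:ℕ):ℝ)/(n:ℝ)) * (K n * ((α-1)/α)) * (Kt n * ((α-1)/α))
            * (C n - t n * q n)^(n-1-1)
          = (((n-1:ℕ):ℝ) * q n * (C n - t n * q n)^(n-1-1)
              * (α/(α-1) * (1 - (t n)^(1-α))))
            / ((α/(α-1))^2 * (n:ℝ) / aSeq α γ n) := by
        simp only [hqdef, hKtdef]
        have hα0 : α ≠ 0 := by linarith
        have hα1' : α - 1 ≠ 0 := by linarith
        field_simp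
      rw [hℓeq]
      exact (div_le_div_iff_of_pos_right hD).2 hbd
    · -- upper bound
      filter_upwards [hEv] with n hE
      obtain ⟨h1, hs1, hb2, hb0', hK1, hKub, hKs, hn1⟩ := hE
      have ha0 : (0:ℝ) < aSeq α γ n := by linarith
      have hn0 : (0:ℝ) < (n:ℝ) := by exact_mod_cast hn1
      have hmss : Real.sqrt (aSeq α γ n) * Real.sqrt (aSeq α γ n) = aSeq α γ n :=
        Real.mul_self_sqrt (by linarith)
      have hq0 : 0 ≤ q n := div_nonneg (by simp only [hKdef]; linarith) ha0.le
      have hC0 : 0 ≤ C n := by simp only [hCdef]; linarith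
      have hC1' : C n ≤ 1 := by simp only [hCdef]; linarith
      have hsq : Real.sqrt (aSeq α γ n) * (q n) ≤ C n := by
        have heq : Real.sqrt (aSeq α γ n) * q n = K n / Real.sqrt (aSeq α γ n) := by
          simp only [hqdef]
          rw [eq_div_iff (by linarith : Real.sqrt (aSeq α γ n) ≠ 0)]
          field_simp
          linear_combination (K n) * hmss
        rw [heq]
        simp only [hCdef]
        linarith [hKs]
      have hD : (0:ℝ) < (α/(α-1))^2 * (n:ℝ) / aSeq α γ n := by
        apply div_pos _ ha0
        apply mul_pos _ hn0
        positivity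
      rw [Fn_repr hα h1 (n-1)]
      have hintC : (∫ x in Set.Ioc 1 (Real.sqrt (aSeq α γ n)),
            α * x ^ (-α-1) * ((1 - (aSeq α γ n)^(-α/2))^(n-1)
              - ((1 - (aSeq α γ n)^(-α/2))
                  - x*(α/(α-1)*(1 - (Real.sqrt (aSeq α γ n))^(1-α))/aSeq α γ n))^(n-1)))
          = ∫ x in Set.Ioc 1 (Real.sqrt (aSeq α γ n)),
            α * x ^ (-α-1) * ((C n)^(n-1) - (C n - x * q n)^(n-1)) := by
        apply MeasureTheory.setIntegral_congr_fun measurableSet_Ioc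
        intro x hx
        simp only [hCdef, hqdef, hKdef, hbdef]
      rw [hintC, div_le_one hD]
      have hbd := bounds_case2_upper (s := Real.sqrt (aSeq α γ n))
        hα hs1 (n-1) (C := C n) (q := q n) hC0 hC1' hq0 hsq
      have hKrfl : α/(α-1) * (1 - (Real.sqrt (aSeq α γ n))^(1-α)) = K n := rfl
      rw [hKrfl] at hbd
      have hK0' : 0 ≤ K n := by simp only [hKdef]; linarith
      have hcast : ((n-1:ℕ):ℝ) ≤ (n:ℝ) := by
        exact_mod_cast Nat.cast_le.2 (Nat.sub_le n 1)
      have hqK0 : 0 ≤ q n * K n := mul_nonneg hq0 hK0'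
      have h1' : ((n-1:ℕ):ℝ) * q n * K n ≤ (n:ℝ) * (q n * K n) := by
        rw [mul_assoc]
        exact mul_le_mul_of_nonneg_right hcast hqK0
      have hqub : q n ≤ (α/(α-1)) / aSeq α γ n := by
        simp only [hqdef]
        exact (div_le_div_iff_of_pos_right ha0).2 hKub
      have h2 : q n * K n ≤ ((α/(α-1))/aSeq α γ n) * (α/(α-1)) :=
        mul_le_mul hqub hKub hK0' (by positivity)
      have h3 : (n:ℝ) * (q n * K n) ≤ (n:ℝ) * (((α/(α-1))/aSeq α γ n) * (α/(α-1))) :=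
        mul_le_mul_of_nonneg_left h2 hn0.le
      have hDeq : (n:ℝ) * (((α/(α-1))/aSeq α γ n) * (α/(α-1)))
          = (α/(α-1))^2 * (n:ℝ) / aSeq α γ n := by
        ring
      linarith
end
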